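/- Let f : ℝⁿ → ℝ be convex and L-smooth with minimizer x*, and consider projected gradient descent onto a closed convex set C containing x*, with step size η = 1/L and inexact gradients g(x_t) = ∇f(x_t) + Δ_t where ‖Δ_t‖ ≤ δ and ‖x − x*‖ ≤ D for all x ∈ C. Then for each t, ‖x_{t+1} − x*‖² − ‖x_t − x*‖² ≤ (2/L)(f(x*) − f(x_{t+1})) + 2δD/L. -/

import Mathlib

open scoped RealInnerProductSpace

variable {n : ℕ}

private lemma line_hasDerivAt (f : EuclideanSpace ℝ (Fin n) → ℝ)
    (hdiff : Differentiable ℝ f) (x v : EuclideanSpace ℝ (Fin n)) (t : ℝ) :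
    HasDerivAt (fun s : ℝ => f (x + s • v)) ⟪gradient f (x + t • v), v⟫ t := by
  have h1 : HasFDerivAt f ((InnerProductSpace.toDual ℝ _) (gradient f (x + t • v))) (x + t • v) :=
    (hasGradientAt_iff_hasFDerivAt).mp (hdiff (x + t • v)).hasGradientAt
  have h2 : HasDerivAt (fun s : ℝ => x + s • v) v t := by
    simpa using ((hasDerivAt_id t).smul_const v).const_add x
  simpa [InnerProductSpace.toDual_apply_apply, Function.comp_def] using h1.comp_hasDerivAt t h2

/-- convexity gradient inequality -/
private lemma conv_grad_ineq (f : EuclideanSpace ℝ (Fin n) → ℝ)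
    (hdiff : Differentiable ℝ f) (hconv : ConvexOn ℝ Set.univ f)
    (x y : EuclideanSpace ℝ (Fin n)) :
    f x + ⟪gradient f x, y - x⟫ ≤ f y := by
  have haff : ConvexOn ℝ Set.univ (fun s : ℝ => f (x + s • (y - x))) := by
    have := hconv.comp_affineMap (AffineMap.lineMap x y)
    have heq : (f ∘ (AffineMap.lineMap x y)) = fun s : ℝ => f (x + s • (y - x)) := by
      funext s
      simp [Function.comp, AffineMap.lineMap_apply, vsub_eq_sub, vadd_eq_add]
      congr 1; abel
    rw [← heq]
    simpa using this
  have hd := line_hasDerivAt f hdiff x (y - x) 0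
  have hslope := haff.le_slope_of_hasDerivAt (Set.mem_univ (0:ℝ)) (Set.mem_univ 1)
    one_pos (by simpa using hd)
  have he0 : x + (0:ℝ) • (y - x) = x := by simp
  have he1 : x + (1:ℝ) • (y - x) = y := by rw [one_smul]; abel
  have h2 : ⟪gradient f x, y - x⟫ ≤ f y - f x := by
    simpa [slope_def_field, he0, he1, PiLp.inner_apply, RCLike.inner_apply] using hslope
  linarith

private lemma grad_lipschitz_cont (f : EuclideanSpace ℝ (Fin n) → ℝ) (L : ℝ) (hL : 0 < L)
    (hsmooth : ∀ x y, ‖gradient f x - gradient f y‖ ≤ L * ‖x - y‖) :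
    Continuous (gradient f) := by
  have : LipschitzWith (Real.toNNReal L) (gradient f) := by
    apply LipschitzWith.of_dist_le_mul
    intro a b
    rw [dist_eq_norm, dist_eq_norm]
    calc ‖gradient f a - gradient f b‖ ≤ L * ‖a - b‖ := hsmooth a b
      _ = (Real.toNNReal L : ℝ) * ‖a - b‖ := by rw [Real.coe_toNNReal _ hL.le]
  exact this.continuous

/-- descent lemma -/
private lemma descent_lemma (f : EuclideanSpace ℝ (Fin n) → ℝ) (L : ℝ) (hL : 0 < L)
    (hdiff : Differentiable ℝ f)
    (hsmooth : ∀ x y, ‖gradient f x - gradient f y‖ ≤ L * ‖x - y‖)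
    (x y : EuclideanSpace ℝ (Fin n)) :
    f y ≤ f x + ⟪gradient f x, y - x⟫ + L / 2 * ‖y - x‖ ^ 2 := by
  set v := y - x with hv
  set φ : ℝ → ℝ := fun t => ⟪gradient f (x + t • v), v⟫ with hφ
  have hφcont : Continuous φ := by
    apply Continuous.inner
    · exact (grad_lipschitz_cont f L hL hsmooth).comp (by fun_prop)
    · exact continuous_const
  have hftc : f (x + (1:ℝ) • v) - f (x + (0:ℝ) • v) = ∫ t in (0:ℝ)..1, φ t := by
    refine (intervalIntegral.integral_eq_sub_of_hasDerivAt
      (fun t _ => line_hasDerivAt f hdiff x v t) (hφcont.intervalIntegrable 0 1)).symm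
  have hbound : ∀ t ∈ Set.Icc (0:ℝ) 1, φ t ≤ φ 0 + L * ‖v‖ ^ 2 * t := by
    intro t ht
    have : φ t - φ 0 = ⟪gradient f (x + t • v) - gradient f (x + (0:ℝ) • v), v⟫ := by
      rw [inner_sub_left]
    have hle : φ t - φ 0 ≤ L * ‖v‖ ^ 2 * t := by
      rw [this]
      calc ⟪gradient f (x + t • v) - gradient f (x + (0:ℝ) • v), v⟫
          ≤ ‖gradient f (x + t • v) - gradient f (x + (0:ℝ) • v)‖ * ‖v‖ :=
            real_inner_le_norm _ _
        _ ≤ (L * ‖(x + t • v) - (x + (0:ℝ) • v)‖) * ‖v‖ := by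
            apply mul_le_mul_of_nonneg_right (hsmooth _ _) (norm_nonneg _)
        _ = L * ‖v‖ ^ 2 * t := by
            have : (x + t • v) - (x + (0:ℝ) • v) = t • v := by
              simp
            rw [this, norm_smul]
            simp [Real.norm_eq_abs, abs_of_nonneg ht.1]
            ring
    linarith
  have hint : ∫ t in (0:ℝ)..1, φ t ≤ ∫ t in (0:ℝ)..1, (φ 0 + L * ‖v‖ ^ 2 * t) := by
    apply intervalIntegral.integral_mono_on zero_le_one
      (hφcont.intervalIntegrable 0 1)
      (by apply Continuous.intervalIntegrable; fun_prop)
    exact hbound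
  have hval : ∫ t in (0:ℝ)..1, (φ 0 + L * ‖v‖ ^ 2 * t) = φ 0 + L / 2 * ‖v‖ ^ 2 := by
    rw [intervalIntegral.integral_add
      (((by fun_prop : Continuous fun _ : ℝ => φ 0)).intervalIntegrable 0 1)
      (((by fun_prop : Continuous fun t : ℝ => L * ‖v‖ ^ 2 * t)).intervalIntegrable 0 1)]
    rw [intervalIntegral.integral_const]
    rw [intervalIntegral.integral_const_mul]
    simp [integral_id]
    ring
  have h0 : φ 0 = ⟪gradient f x, y - x⟫ := by simp [hφ, hv]
  have h1 : x + (1:ℝ) • v = y := by simp [hv]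
  have h0' : x + (0:ℝ) • v = x := by simp
  rw [h1, h0'] at hftc
  rw [← h0]
  rw [hval] at hint
  linarith

private lemma proj_var (C : Set (EuclideanSpace ℝ (Fin n))) (hCconv : Convex ℝ C)
    (proj : EuclideanSpace ℝ (Fin n) → EuclideanSpace ℝ (Fin n))
    (hproj : ∀ z, proj z ∈ C ∧ ∀ y ∈ C, ‖proj z - z‖ ≤ ‖y - z‖)
    (z : EuclideanSpace ℝ (Fin n)) :
    ∀ w ∈ C, ⟪z - proj z, w - proj z⟫ ≤ 0 := by
  intro w hw
  set v := proj z with hv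
  have hmem := (hproj z).1
  set p : ℝ := ⟪z - v, w - v⟫ with hp
  set q : ℝ := ‖w - v‖ ^ 2 with hq
  have hq0 : 0 ≤ q := by positivity
  have key : ∀ θ : ℝ, 0 < θ → θ ≤ 1 → 2 * p ≤ θ * q := by
    intro θ h1 h2
    have hc : v + θ • (w - v) ∈ C := by
      have hcomb := hCconv hmem hw (by linarith : (0:ℝ) ≤ 1 - θ) h1.le (by ring)
      have : (1 - θ) • v + θ • w = v + θ • (w - v) := by
        rw [sub_smul, smul_sub, one_smul]; abel
      rwa [this] at hcomb
    have hle : ‖v - z‖ ≤ ‖(v + θ • (w - v)) - z‖ := (hproj z).2 _ hc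
    have hsq : ‖v - z‖ ^ 2 ≤ ‖(v - z) + θ • (w - v)‖ ^ 2 := by
      have hre : (v + θ • (w - v)) - z = (v - z) + θ • (w - v) := by abel
      rw [← hre]
      have := mul_self_le_mul_self (norm_nonneg _) hle
      simpa [pow_two] using this
    rw [norm_add_sq_real, real_inner_smul_right] at hsq
    have hinn : ⟪v - z, w - v⟫ = -p := by rw [hp, ← inner_neg_left, neg_sub]
    have hns : ‖θ • (w - v)‖ ^ 2 = θ ^ 2 * q := by
      rw [norm_smul, mul_pow, hq, Real.norm_eq_abs, sq_abs]
    rw [hinn, hns] at hsq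
    have h3 : θ * (2 * p) ≤ θ * (θ * q) := by nlinarith
    exact (mul_le_mul_iff_right₀ h1).mp h3
  by_contra hcon
  push_neg at hcon
  rcases eq_or_lt_of_le hq0 with hq1 | hq1
  · have := key 1 one_pos le_rfl
    rw [← hq1] at this
    linarith
  · have hθ1 : 0 < min 1 (p / q) := lt_min one_pos (div_pos hcon hq1)
    have hθ2 : min 1 (p / q) ≤ 1 := min_le_left _ _
    have := key _ hθ1 hθ2
    have h4 : min 1 (p / q) * q ≤ (p / q) * q :=
      mul_le_mul_of_nonneg_right (min_le_right _ _) hq0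
    rw [div_mul_cancel₀ _ hq1.ne'] at h4
    linarith

/-- One-step inequality for projected gradient descent with inexact gradients
on a convex `L`-smooth function over a closed convex set `C` containing the
optimum. -/
theorem projected_inexact_gd_one_step {n : ℕ}
    (f : EuclideanSpace ℝ (Fin n) → ℝ) (L δ D : ℝ) (hL : 0 < L) (hδ : 0 ≤ δ)
    (hD : 0 ≤ D)
    (hdiff : Differentiable ℝ f)
    (hconv : ConvexOn ℝ Set.univ f)
    (hsmooth : ∀ x y, ‖gradient f x - gradient f y‖ ≤ L * ‖x - y‖)
    (C : Set (EuclideanSpace ℝ (Fin n)))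
    (hCconv : Convex ℝ C) (hCclosed : IsClosed C)
    (xstar : EuclideanSpace ℝ (Fin n))
    (hxstarC : xstar ∈ C)
    (hmin : ∀ y, f xstar ≤ f y)
    (hdiam : ∀ x ∈ C, ‖x - xstar‖ ≤ D)
    (proj : EuclideanSpace ℝ (Fin n) → EuclideanSpace ℝ (Fin n))
    (hproj : ∀ z, proj z ∈ C ∧ ∀ y ∈ C, ‖proj z - z‖ ≤ ‖y - z‖)
    (x Δ : ℕ → EuclideanSpace ℝ (Fin n))
    (hx0 : x 0 ∈ C)
    (hΔ : ∀ t, ‖Δ t‖ ≤ δ)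
    (hiter : ∀ t, x (t + 1) = proj (x t - (1 / L) • (gradient f (x t) + Δ t))) :
    ∀ t : ℕ,
      ‖x (t + 1) - xstar‖ ^ 2 - ‖x t - xstar‖ ^ 2 ≤
        (2 / L) * (f xstar - f (x (t + 1))) + 2 * δ * D / L := by
  intro t
  set a := x t with ha
  set p := x (t + 1) with hp
  set g := gradient f a + Δ t with hg
  have hpdef : p = proj (a - (1 / L) • g) := hiter t
  have hpC : p ∈ C := by rw [hpdef]; exact (hproj _).1
  -- projection variational inequality
  have hvar := proj_var C hCconv proj hproj (a - (1 / L) • g) xstar hxstarC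
  rw [← hpdef] at hvar
  have hre : a - (1 / L) • g - p = (a - p) - (1 / L) • g := by abel
  rw [hre, inner_sub_left, real_inner_smul_left] at hvar
  -- abbreviations
  set A := ‖a - xstar‖ ^ 2 with hA
  set B := ‖p - xstar‖ ^ 2 with hB
  set Q := ‖p - a‖ ^ 2 with hQ
  set J : ℝ := ⟪a - p, p - xstar⟫ with hJ
  set Ig : ℝ := ⟪g, p - xstar⟫ with hIg
  set Id' : ℝ := ⟪Δ t, p - xstar⟫ with hId
  -- h1 : Ig ≤ L * J
  have hJ' : J = -⟪a - p, xstar - p⟫ := by rw [hJ, ← inner_neg_right, neg_sub]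
  have hIg' : Ig = -⟪g, xstar - p⟫ := by rw [hIg, ← inner_neg_right, neg_sub]
  have h1 : Ig ≤ L * J := by
    have hmul := mul_le_mul_of_nonneg_left hvar hL.le
    have : L * (⟪a - p, xstar - p⟫ - 1 / L * ⟪g, xstar - p⟫) =
        L * ⟪a - p, xstar - p⟫ - ⟪g, xstar - p⟫ := by
      field_simp
    rw [mul_zero, this] at hmul
    rw [hIg', hJ']
    linarith
  -- norm identity
  have hid : A = Q + 2 * J + B := by
    have h := norm_add_sq_real (a - p) (p - xstar)
    have hsum : (a - p) + (p - xstar) = a - xstar := by abel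
    rw [hsum] at h
    have hQ' : ‖a - p‖ ^ 2 = Q := by rw [hQ, norm_sub_rev]
    have hJn : ⟪a - p, p - xstar⟫ = J := rfl
    rw [hQ', hJn] at h
    rw [hA, hB]
    linarith
  -- convexity and descent
  have hBineq := conv_grad_ineq f hdiff hconv a xstar
  have hCineq := descent_lemma f L hL hdiff hsmooth a p
  -- inner product combination
  have hsum3 : ⟪gradient f a, p - a⟫ - ⟪gradient f a, xstar - a⟫ = Ig - Id' := by
    rw [← inner_sub_right]
    have : (p - a) - (xstar - a) = p - xstar := by abel
    rw [this, hIg, hId, hg, inner_add_left]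
    ring
  -- delta bound
  have hdel : -Id' ≤ δ * D := by
    have : -Id' = ⟪Δ t, xstar - p⟫ := by rw [hId, ← inner_neg_right, neg_sub]
    rw [this]
    calc ⟪Δ t, xstar - p⟫ ≤ ‖Δ t‖ * ‖xstar - p‖ := real_inner_le_norm _ _
      _ ≤ δ * D := by
          apply mul_le_mul (hΔ t) _ (norm_nonneg _) hδ
          rw [norm_sub_rev]
          exact hdiam p hpC
  -- key inequality
  have h1' : Ig ≤ L / 2 * (A - Q - B) := by
    calc Ig ≤ L * J := h1
      _ = L / 2 * (A - Q - B) := by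
          have : J = (A - Q - B) / 2 := by linarith
          rw [this]; ring
  have hQe : L / 2 * ‖p - a‖ ^ 2 = L / 2 * Q := by rw [hQ]
  have key : f p - f xstar ≤ L / 2 * (A - B) + δ * D := by
    have : f p ≤ f xstar + (Ig - Id') + L / 2 * Q := by linarith
    linarith
  -- conclude
  have h3 : L / 2 * (B - A) ≤ (f xstar - f p) + δ * D := by linarith
  have h4 := mul_le_mul_of_nonneg_left h3 (by positivity : (0:ℝ) ≤ 2 / L)
  have h5 : 2 / L * (L / 2 * (B - A)) = B - A := by field_simp
  have h6 : 2 / L * ((f xstar - f p) + δ * D) =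
      2 / L * (f xstar - f p) + 2 * δ * D / L := by ring
  rw [h5, h6] at h4
  exact h4
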